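/- arXiv:2509.20275 — 2 statements merged into one kernel-verified Lean document; each statement's English description precedes it below -/
import Mathlib

section
/- Let A = k⟨⟨x,y⟩⟩ and define a linear map F from the span of elements P(ad_x, ad_y)(z) (inside the free associative algebra on x, y, z, where P ranges over k⟨⟨x,y⟩⟩) to A by collecting, from the expansion of P(ad_x,ad_y)(z), the words of the form (word in x,y)·z·(word in x,y) and recording their coefficients as prescribed by the bimodule map sending z ↦ 1 with left letters acting by left multiplication and right letters acting by right multiplication after applying the augmentation. Then F(P(ad_x, ad_y)(z)) = S(P)(x,y), where S is the antipode of the concatenation Hopf algebra (reversal of words with sign (−1)^{length}). In particular, F is injective on this span. -/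
open scoped BigOperators TensorProduct

noncomputable section

variable (k : Type*) [Field k] [CharZero k]

/-- Model of the noncommutative (power-series) algebra `A = k⟨⟨x₀,x₁⟩⟩`. -/
abbrev A := MonoidAlgebra k (FreeMonoid (Fin 2))

def x0 : A k := MonoidAlgebra.single (FreeMonoid.of 0) 1
def x1 : A k := MonoidAlgebra.single (FreeMonoid.of 1) 1
def gen (i : Fin 2) : A k := MonoidAlgebra.single (FreeMonoid.of i) 1
def word (l : List (Fin 2)) : A k := MonoidAlgebra.single (FreeMonoid.ofList l) 1

/-- the augmentation (constant term) -/
def eps (φ : A k) : k := φ.coeff 1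

/-- right Fox derivative `d^R_i` -/
def dR (i : Fin 2) (φ : A k) : A k :=
  MonoidAlgebra.ofCoeff (Finsupp.comapDomain (fun w => FreeMonoid.of i * w) φ.coeff
    (Function.Injective.injOn (mul_right_injective (FreeMonoid.of i))))

/-- left Fox derivative `d^L_i` -/
def dL (i : Fin 2) (φ : A k) : A k :=
  MonoidAlgebra.ofCoeff (Finsupp.comapDomain (fun w => w * FreeMonoid.of i) φ.coeff
    (Function.Injective.injOn (mul_left_injective (FreeMonoid.of i))))

/-- reduced coaction on a word -/
def muW : List (Fin 2) → A k
  | [] => 0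
  | [_] => 0
  | a :: b :: t =>
      (if a = b then word k (a :: t) else 0) + gen k a * muW (b :: t)

/-- the reduced coaction `μ` -/
def mu (φ : A k) : A k := Finsupp.sum φ.coeff fun w c => c • muW k (FreeMonoid.toList w)

/-- substitution `φ(u,v)` -/
def subst (u v : A k) : A k →ₐ[k] A k :=
  (MonoidAlgebra.lift k (A k) (FreeMonoid (Fin 2)))
    (FreeMonoid.lift (fun i : Fin 2 => if i = 0 then u else v))

/-- shuffle coproduct (the algebra map for concatenation with primitive generators) -/
def delta : A k →ₐ[k] TensorProduct k (A k) (A k) :=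
  (MonoidAlgebra.lift k (TensorProduct k (A k) (A k)) (FreeMonoid (Fin 2)))
    (FreeMonoid.lift (fun i : Fin 2 =>
      gen k i ⊗ₜ[k] (1 : A k) + (1 : A k) ⊗ₜ[k] gen k i))

/-- `ψ` is a Lie series: primitive for the shuffle coproduct -/
def IsPrim (ψ : A k) : Prop :=
  delta k ψ = ψ ⊗ₜ[k] (1 : A k) + (1 : A k) ⊗ₜ[k] ψ


/-- free associative algebra on `x = 0`, `y = 1`, `z = 2` -/
abbrev A3 := MonoidAlgebra k (FreeMonoid (Fin 3))

def g3 (i : Fin 3) : A3 k := MonoidAlgebra.single (FreeMonoid.of i) 1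

/-- `ad_{x_{i₁}} ∘ ⋯ ∘ ad_{x_{iₘ}}` applied to `z`, letters in `{x,y}` -/
def adW3 : List (Fin 2) → A3 k
  | [] => g3 k 2
  | i :: t => ⁅g3 k (Fin.castSucc i), adW3 t⁆

/-- `P ↦ P(ad_x, ad_y)(z)` -/
def adSubst (P : A k) : A3 k :=
  Finsupp.sum P.coeff fun w c => c • adW3 k (FreeMonoid.toList w)

def down : Fin 3 → Fin 2 := fun i => if i = 0 then 0 else 1

/-- the bimodule map `F` with `F(z) = 1`: on a word it keeps only words of the form
`z·v` with `v` a word in `x,y` (letters left of `z` act through the augmentation,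
letters right of `z` by right multiplication). -/
def Fword (w : List (Fin 3)) : A k :=
  if w.head? = some 2 ∧ (2 : Fin 3) ∉ w.tail then word k (w.tail.map down) else 0

def Fmap (γ : A3 k) : A k :=
  Finsupp.sum γ.coeff fun w c => c • Fword k (FreeMonoid.toList w)

/-- the antipode of the concatenation Hopf algebra: word reversal with sign
`(−1)^{length}` -/
def antipodeA (φ : A k) : A k :=
  Finsupp.sum φ.coeff fun w c =>
    ((-1 : k) ^ (FreeMonoid.toList w).length * c) • word k (FreeMonoid.toList w).reverse

-- Auxiliary lemmas

set_option linter.unusedSectionVars false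

namespace Aux

variable {k}

/-- `Fmap` as a linear map. -/
def FmapL : A3 k →ₗ[k] A k :=
  Finsupp.linearCombination k (fun w : FreeMonoid (Fin 3) => Fword k (FreeMonoid.toList w))
    ∘ₗ (MonoidAlgebra.coeffLinearEquiv k).toLinearMap

lemma Fmap_eq (γ : A3 k) : Fmap k γ = FmapL γ := rfl

lemma FmapL_single (w : FreeMonoid (Fin 3)) (c : k) :
    FmapL (MonoidAlgebra.single w c) = c • Fword k (FreeMonoid.toList w) := by
  show (Finsupp.single w c).sum (fun i a => a • Fword k (FreeMonoid.toList i)) = _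
  exact Finsupp.sum_single_index (zero_smul _ _)

/-- `antipodeA` as a linear map. -/
def antiL : A k →ₗ[k] A k :=
  Finsupp.linearCombination k (fun w : FreeMonoid (Fin 2) =>
    ((-1 : k) ^ (FreeMonoid.toList w).length) • word k (FreeMonoid.toList w).reverse)
    ∘ₗ (MonoidAlgebra.coeffLinearEquiv k).toLinearMap

lemma antiL_single (w : FreeMonoid (Fin 2)) (c : k) :
    antiL (MonoidAlgebra.single w c)
      = c • (((-1 : k) ^ (FreeMonoid.toList w).length)
          • word k (FreeMonoid.toList w).reverse) := by
  show (Finsupp.single w c).sum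
      (fun i a => a • (((-1 : k) ^ (FreeMonoid.toList i).length)
        • word k (FreeMonoid.toList i).reverse)) = _
  exact Finsupp.sum_single_index (zero_smul _ _)

lemma antipodeA_eq (φ : A k) : antipodeA k φ = antiL φ := by
  show Finsupp.sum φ.coeff _ = Finsupp.sum φ.coeff _
  refine Finsupp.sum_congr fun w _ => ?_
  show _ = φ.coeff w • (((-1 : k) ^ (FreeMonoid.toList w).length)
    • word k (FreeMonoid.toList w).reverse)
  rw [smul_smul, mul_comm]

lemma word_append (l1 l2 : List (Fin 2)) :
    word k (l1 ++ l2) = word k l1 * word k l2 := by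
  rw [word, word, word, MonoidAlgebra.single_mul_single, one_mul]
  rfl

lemma word_nil : word k ([] : List (Fin 2)) = 1 := rfl

lemma word_singleton (i : Fin 2) : word k [i] = gen k i := rfl

lemma Fword_cons {j : Fin 3} (hj : j ≠ 2) (w : List (Fin 3)) :
    Fword k (j :: w) = 0 := by
  rw [Fword, if_neg]
  rintro ⟨h, -⟩
  exact hj (by simpa using h)

lemma Fword_append {j : Fin 3} (hj : j ≠ 2) (w : List (Fin 3)) :
    Fword k (w ++ [j]) = Fword k w * gen k (down j) := by
  cases w with
  | nil =>
      rw [List.nil_append, Fword_cons hj, Fword]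
      simp
  | cons a t =>
      rw [Fword, Fword, List.cons_append, List.head?_cons, List.tail_cons, List.head?_cons,
        List.tail_cons]
      by_cases h : a = (2 : Fin 3) ∧ (2 : Fin 3) ∉ t
      · rw [if_pos ⟨by simpa using h.1, by
          simp only [List.mem_append, List.mem_singleton]
          rintro (hm | hm)
          exacts [h.2 hm, hj hm.symm]⟩,
          if_pos ⟨by simpa using h.1, h.2⟩]
        rw [List.map_append, word_append]
        rfl
      · rw [if_neg (by
          rintro ⟨h1, h3⟩
          exact h ⟨by simpa using h1, fun hm => h3 (by simp [hm])⟩),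
          if_neg (by simpa using h)]
        rw [zero_mul]

lemma toList_of_mul (j : Fin 3) (w : FreeMonoid (Fin 3)) :
    FreeMonoid.toList (FreeMonoid.of j * w) = j :: FreeMonoid.toList w := rfl

lemma toList_mul_of (j : Fin 3) (w : FreeMonoid (Fin 3)) :
    FreeMonoid.toList (w * FreeMonoid.of j) = FreeMonoid.toList w ++ [j] := rfl

lemma Fmap_mul_left {j : Fin 3} (hj : j ≠ 2) (γ : A3 k) :
    Fmap k (g3 k j * γ) = 0 := by
  rw [Fmap_eq]
  induction γ using MonoidAlgebra.induction_linear with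
  | zero => simp
  | add f g hf hg => rw [mul_add, map_add, hf, hg, add_zero]
  | single w c =>
      rw [g3, MonoidAlgebra.single_mul_single, one_mul, FmapL_single,
        toList_of_mul, Fword_cons hj, smul_zero]

lemma Fmap_mul_right {j : Fin 3} (hj : j ≠ 2) (γ : A3 k) :
    Fmap k (γ * g3 k j) = Fmap k γ * gen k (down j) := by
  rw [Fmap_eq, Fmap_eq]
  induction γ using MonoidAlgebra.induction_linear with
  | zero => simp
  | add f g hf hg => rw [add_mul, map_add, hf, hg, map_add, add_mul]
  | single w c =>
      rw [g3, MonoidAlgebra.single_mul_single, mul_one, FmapL_single, FmapL_single,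
        toList_mul_of, Fword_append hj, smul_mul_assoc]

lemma down_castSucc (i : Fin 2) : down (Fin.castSucc i) = i := by
  fin_cases i <;> rfl

lemma castSucc_ne_two (i : Fin 2) : Fin.castSucc i ≠ 2 := by
  fin_cases i <;> decide

lemma Fmap_adW3 (l : List (Fin 2)) :
    Fmap k (adW3 k l) = ((-1 : k) ^ l.length) • word k l.reverse := by
  induction l with
  | nil =>
      rw [adW3, g3, Fmap_eq]
      rw [show (MonoidAlgebra.single (FreeMonoid.of (2 : Fin 3)) (1 : k) : A3 k)
        = MonoidAlgebra.single (FreeMonoid.of (2 : Fin 3)) (1 : k) from rfl, FmapL_single]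
      rw [show FreeMonoid.toList (FreeMonoid.of (2 : Fin 3)) = [2] from rfl]
      rw [Fword, if_pos (by simp)]
      simp [word_nil]
  | cons i t ih =>
      rw [adW3, Ring.lie_def, Fmap_eq, map_sub, ← Fmap_eq (k := k), ← Fmap_eq (k := k)]
      rw [Fmap_mul_left (castSucc_ne_two i), Fmap_mul_right (castSucc_ne_two i), ih]
      rw [down_castSucc, zero_sub, List.length_cons, List.reverse_cons, word_append,
        word_singleton, pow_succ, mul_smul, neg_one_smul, smul_neg, smul_mul_assoc]

lemma main (P : A k) : Fmap k (adSubst k P) = antipodeA k P := by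
  rw [antipodeA_eq, Fmap_eq, adSubst]
  rw [show antiL P = P.coeff.sum (fun w c => c • (((-1 : k) ^ (FreeMonoid.toList w).length)
    • word k (FreeMonoid.toList w).reverse)) from rfl]
  rw [Finsupp.sum, Finsupp.sum, map_sum]
  refine Finset.sum_congr rfl fun w _ => ?_
  rw [map_smul, ← Fmap_eq, Fmap_adW3]

lemma anti_anti (φ : A k) : antiL (antiL φ) = φ := by
  induction φ using MonoidAlgebra.induction_linear with
  | zero => simp
  | add f g hf hg => rw [map_add, map_add, hf, hg]
  | single w c =>
      rw [antiL_single, map_smul, map_smul, word,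
        show (MonoidAlgebra.single (FreeMonoid.ofList (FreeMonoid.toList w).reverse)
          (1 : k) : A k)
          = MonoidAlgebra.single (FreeMonoid.ofList (FreeMonoid.toList w).reverse)
            (1 : k) from rfl,
        antiL_single]
      simp only [FreeMonoid.toList_ofList, List.length_reverse, List.reverse_reverse,
        one_smul, one_mul, smul_smul]
      rw [mul_comm c, ← pow_add, Even.neg_one_pow ⟨_, rfl⟩, one_mul]
      simp [word, MonoidAlgebra.smul_single, show FreeMonoid.ofList (FreeMonoid.toList w) = w
        from rfl]

lemma anti_inj : Function.Injective (antipodeA k) := by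
  intro a b h
  rw [antipodeA_eq, antipodeA_eq] at h
  have := congrArg antiL h
  rwa [anti_anti, anti_anti] at this

end Aux

/-- `F(P(ad_x,ad_y)(z)) = S(P)(x,y)`; in particular `F` is injective
on the span of the elements `P(ad_x,ad_y)(z)`. -/
theorem F_of_adSubst_eq_antipode :
    (∀ P : A k, Fmap k (adSubst k P) = antipodeA k P) ∧
    Set.InjOn (Fmap k) (Set.range (adSubst k)) := by
  constructor
  · exact Aux.main
  · rintro a ⟨P, rfl⟩ b ⟨Q, rfl⟩ h
    rw [Aux.main, Aux.main] at h
    rw [Aux.anti_inj h]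
end
end

section
/- Let ψ ∈ A and suppose ψ satisfies the two reduced-coaction identities: (1) μ(ψ(−x₀−x₁, x₁)) = (d^R₁ψ(−x₀−x₁,x₁))(x₀+x₁, 0) − d^R₁(ψ(−x₀−x₁,x₁)) − (d^R₁ψ(−x₀−x₁,x₁))(x₁, 0), and (2) the identity obtained from (1) by exchanging x₀ and x₁: μ(ψ(−x₀−x₁, x₀)) = (d^R₁ψ(−x₀−x₁,x₁))(x₀+x₁, 0) − d^R₀(ψ(−x₀−x₁,x₀)) − (d^R₁ψ(−x₀−x₁,x₁))(x₀, 0). Set f(x) := x·(d^R₁ψ(−x₀−x₁,x₁))(x, 0) ∈ k[[x]]. Then the potential h_ψ := x₀·ψ(−x₀−x₁,x₀) + x₁·ψ(−x₀−x₁,x₁) satisfies the noncommutative krv2 equation μ(h_ψ) = f(x₀+x₁) − f(x₀) − f(x₁). -/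
open scoped BigOperators TensorProduct

noncomputable section

variable (k : Type*) [Field k] [CharZero k]

/-- `ψ(−x₀−x₁, x₁)` -/
def psiInf1 (ψ : A k) : A k := (subst k (-(x0 k + x1 k)) (x1 k)) ψ

/-- `ψ(−x₀−x₁, x₀)` -/
def psiInf0 (ψ : A k) : A k := (subst k (-(x0 k + x1 k)) (x0 k)) ψ

/-- `q = d^R₁(ψ(−x₀−x₁,x₁))` -/
def qOf (ψ : A k) : A k := dR k 1 (psiInf1 k ψ)


section Aux

variable {k}

lemma mu_add (φ φ' : A k) : mu k (φ + φ') = mu k φ + mu k φ' := by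
  unfold mu
  exact Finsupp.sum_add_index' (fun a => zero_smul k _) (fun a b₁ b₂ => add_smul b₁ b₂ _)

lemma mu_smul (b : k) (φ : A k) : mu k (b • φ) = b • mu k φ := by
  unfold mu
  rw [MonoidAlgebra.coeff_smul, Finsupp.sum_smul_index' (h := fun w c => c • muW k (FreeMonoid.toList w)) (fun w => zero_smul k _), Finsupp.smul_sum]
  simp [smul_smul]

lemma mu_zero : mu k (0 : A k) = 0 := by simp [mu]

lemma dR_add (i : Fin 2) (φ φ' : A k) : dR k i (φ + φ') = dR k i φ + dR k i φ' :=
  congrArg MonoidAlgebra.ofCoeff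
    (Finsupp.comapDomain_add_of_injective (mul_right_injective (FreeMonoid.of i)) φ.coeff φ'.coeff)

lemma dR_smul (i : Fin 2) (b : k) (φ : A k) : dR k i (b • φ) = b • dR k i φ :=
  congrArg MonoidAlgebra.ofCoeff
    (Finsupp.comapDomain_smul_of_injective (mul_right_injective (FreeMonoid.of i)) b φ.coeff)

lemma dR_zero (i : Fin 2) : dR k i (0 : A k) = 0 := by
  ext w; simp [dR, Finsupp.comapDomain_apply]

lemma gen_mul_word (i : Fin 2) (l : List (Fin 2)) :
    gen k i * word k l = word k (i :: l) := by
  unfold gen word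
  rw [MonoidAlgebra.single_mul_single, one_mul]
  rfl

lemma mu_single (w : FreeMonoid (Fin 2)) (c : k) :
    mu k (MonoidAlgebra.single w c) = c • muW k (FreeMonoid.toList w) :=
  Finsupp.sum_single_index (zero_smul k _)

lemma mu_word (l : List (Fin 2)) : mu k (word k l) = muW k l := by
  unfold word
  rw [mu_single, one_smul]
  rfl

lemma dR_word_nil (i : Fin 2) : dR k i (word k ([] : List (Fin 2))) = 0 := by
  ext w
  rw [dR, Finsupp.comapDomain_apply]
  show (Finsupp.single (FreeMonoid.ofList []) (1:k)) (FreeMonoid.of i * w) = (0 : A k).coeff w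
  rw [Finsupp.single_eq_of_ne, MonoidAlgebra.coeff_zero, Finsupp.zero_apply]
  intro h
  have := congrArg FreeMonoid.toList h
  simp at this

lemma dR_word_cons (i a : Fin 2) (t : List (Fin 2)) :
    dR k i (word k (a :: t)) = if i = a then word k t else 0 := by
  by_cases h : i = a
  · subst h
    rw [if_pos rfl]
    ext w
    rw [dR, Finsupp.comapDomain_apply]
    show (Finsupp.single (FreeMonoid.ofList (i :: t)) (1:k)) (FreeMonoid.of i * w)
      = (Finsupp.single (FreeMonoid.ofList t) (1:k)) w
    have hh : FreeMonoid.ofList (i :: t) = FreeMonoid.of i * FreeMonoid.ofList t := rfl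
    by_cases hw : w = FreeMonoid.ofList t
    · rw [hh, hw, Finsupp.single_eq_same, Finsupp.single_eq_same]
    · rw [hh, Finsupp.single_eq_of_ne, Finsupp.single_eq_of_ne hw]
      exact fun he => hw ((mul_right_injective (FreeMonoid.of i)) he)
  · rw [if_neg h]
    ext w
    rw [dR, Finsupp.comapDomain_apply]
    show (Finsupp.single (FreeMonoid.ofList (a :: t)) (1:k)) (FreeMonoid.of i * w) = (0 : A k).coeff w
    rw [Finsupp.single_eq_of_ne, MonoidAlgebra.coeff_zero, Finsupp.zero_apply]
    intro he
    have := congrArg FreeMonoid.toList he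
    simp at this
    exact h this.1

lemma key_word (i : Fin 2) (l : List (Fin 2)) :
    mu k (gen k i * word k l) = gen k i * dR k i (word k l) + gen k i * mu k (word k l) := by
  rw [gen_mul_word, mu_word, mu_word]
  cases l with
  | nil => simp [dR_word_nil, muW]
  | cons a t =>
    rw [dR_word_cons]
    show muW k (i :: a :: t) = _
    rw [muW]
    congr 1
    split_ifs with h
    · subst h; rw [gen_mul_word]
    · rw [mul_zero]

lemma key (i : Fin 2) (φ : A k) :
    mu k (gen k i * φ) = gen k i * dR k i φ + gen k i * mu k φ := by
  induction φ using MonoidAlgebra.induction_linear with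
  | zero => simp [mu_zero, dR_zero]
  | add f g hf hg =>
    rw [mul_add, mu_add, hf, hg, dR_add, mu_add, mul_add, mul_add]
    abel
  | single w b =>
    have hw : (MonoidAlgebra.single w b : A k) = b • word k (FreeMonoid.toList w) := by
      unfold word
      rw [MonoidAlgebra.smul_single, smul_eq_mul, mul_one, FreeMonoid.ofList_toList]
    rw [hw, mul_smul_comm, mu_smul, key_word, dR_smul, mu_smul, mul_smul_comm,
      mul_smul_comm, smul_add]

end Aux

/-- given the two reduced-coaction identities, the potential
`h_ψ = x₀ψ(−x₀−x₁,x₀) + x₁ψ(−x₀−x₁,x₁)` satisfies the noncommutative krv2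
equation `μ(h_ψ) = f(x₀+x₁) − f(x₀) − f(x₁)` with
`f(x) = x·(d^R₁ψ(−x₀−x₁,x₁))(x,0)`. -/


theorem potential_satisfies_noncommutative_krv2 (ψ : A k)
    (h1 : mu k (psiInf1 k ψ) =
        (subst k (x0 k + x1 k) 0) (qOf k ψ) - qOf k ψ -
          (subst k (x1 k) 0) (qOf k ψ))
    (h2 : mu k (psiInf0 k ψ) =
        (subst k (x0 k + x1 k) 0) (qOf k ψ) - dR k 0 (psiInf0 k ψ) -
          (subst k (x0 k) 0) (qOf k ψ)) :
    mu k (x0 k * psiInf0 k ψ + x1 k * psiInf1 k ψ) =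
      (x0 k + x1 k) * (subst k (x0 k + x1 k) 0) (qOf k ψ) -
        x0 k * (subst k (x0 k) 0) (qOf k ψ) -
        x1 k * (subst k (x1 k) 0) (qOf k ψ) := by
  have g0 : gen k 0 = x0 k := rfl
  have g1 : gen k 1 = x1 k := rfl
  have e0 := key 0 (psiInf0 k ψ)
  have e1 := key 1 (psiInf1 k ψ)
  rw [g0] at e0; rw [g1] at e1
  rw [mu_add, e0, e1, h1, h2]
  have hq : dR k 1 (psiInf1 k ψ) = qOf k ψ := rfl
  rw [hq]
  noncomm_ring
end
end
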